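/- arXiv:2401.15491 — 3 statements merged into one kernel-verified Lean document; each statement's English description precedes it below -/
import Mathlib

section
/- Let P, Q be probability measures on (T, F) with d_Mult(P, Q) ≤ ε, and let ν be a σ-finite measure dominating P with density p = dP/dν. Then Q is absolutely continuous with respect to ν and admits a density q with e^{−ε} p(t) ≤ q(t) ≤ e^{ε} p(t) for ν-almost every t. -/
open MeasureTheory ENNReal

/-- `|ln(a/b)|` as an extended nonnegative real, with the conventions
`0/0 = ∞/∞ = 1` (so the value is `0` in those cases). -/
noncomputable def logRatio (a b : ℝ≥0∞) : ℝ≥0∞ :=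
  if (a = 0 ∧ b = 0) ∨ (a = ⊤ ∧ b = ⊤) then 0
  else if a = 0 ∨ b = 0 ∨ a = ⊤ ∨ b = ⊤ then ⊤
  else ENNReal.ofReal |Real.log (a.toReal / b.toReal)|

/-- The multiplicative distance `d_Mult(μ,ν) = sup_{S ∈ F} |ln(μ(S)/ν(S))|`. -/
noncomputable def dMult {T : Type*} [MeasurableSpace T] (μ ν : Measure T) : ℝ≥0∞ :=
  ⨆ (S : Set T) (_ : MeasurableSet S), logRatio (μ S) (ν S)

lemma logRatio_bound {a b : ℝ≥0∞} {ε : ℝ} (hε : 0 ≤ ε) (ha : a ≠ ⊤) (hb : b ≠ ⊤)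
    (h : logRatio a b ≤ ENNReal.ofReal ε) :
    b ≤ ENNReal.ofReal (Real.exp ε) * a ∧ a ≤ ENNReal.ofReal (Real.exp ε) * b := by
  unfold logRatio at h
  by_cases h00 : (a = 0 ∧ b = 0) ∨ (a = ⊤ ∧ b = ⊤)
  · rcases h00 with ⟨h1, h2⟩ | ⟨h1, h2⟩
    · simp [h1, h2]
    · exact absurd h1 ha
  rw [if_neg h00] at h
  by_cases hdeg : a = 0 ∨ b = 0 ∨ a = ⊤ ∨ b = ⊤
  · rw [if_pos hdeg] at h
    simp [top_le_iff, ENNReal.ofReal_ne_top] at h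
  rw [if_neg hdeg] at h
  push_neg at hdeg
  obtain ⟨ha0, hb0, -, -⟩ := hdeg
  have hat : 0 < a.toReal := ENNReal.toReal_pos ha0 ha
  have hbt : 0 < b.toReal := ENNReal.toReal_pos hb0 hb
  have habs : |Real.log (a.toReal / b.toReal)| ≤ ε := by
    rwa [ENNReal.ofReal_le_ofReal_iff hε] at h
  rw [abs_le] at habs
  have hdiv_pos : 0 < a.toReal / b.toReal := div_pos hat hbt
  have hub : a.toReal / b.toReal ≤ Real.exp ε := by
    rw [← Real.exp_log hdiv_pos]; exact Real.exp_le_exp.mpr habs.2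
  have hlb : Real.exp (-ε) ≤ a.toReal / b.toReal := by
    rw [← Real.exp_log hdiv_pos]; exact Real.exp_le_exp.mpr habs.1
  have h1 : a.toReal ≤ Real.exp ε * b.toReal := by
    rw [div_le_iff₀ hbt] at hub; linarith
  have hlb' : Real.exp (-ε) * b.toReal ≤ a.toReal := by
    rw [le_div_iff₀ hbt] at hlb
    exact hlb
  have h2 : b.toReal ≤ Real.exp ε * a.toReal := by
    have h3 := mul_le_mul_of_nonneg_left hlb' (Real.exp_pos ε).le
    rwa [← mul_assoc, ← Real.exp_add, add_neg_cancel, Real.exp_zero, one_mul] at h3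
  constructor
  · calc b = ENNReal.ofReal b.toReal := (ENNReal.ofReal_toReal hb).symm
      _ ≤ ENNReal.ofReal (Real.exp ε * a.toReal) := ENNReal.ofReal_le_ofReal h2
      _ = ENNReal.ofReal (Real.exp ε) * a := by
          rw [ENNReal.ofReal_mul (Real.exp_pos ε).le, ENNReal.ofReal_toReal ha]
  · calc a = ENNReal.ofReal a.toReal := (ENNReal.ofReal_toReal ha).symm
      _ ≤ ENNReal.ofReal (Real.exp ε * b.toReal) := ENNReal.ofReal_le_ofReal h1
      _ = ENNReal.ofReal (Real.exp ε) * b := by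
          rw [ENNReal.ofReal_mul (Real.exp_pos ε).le, ENNReal.ofReal_toReal hb]

/-- If `d_Mult(P,Q) ≤ ε` and `ν` is a σ-finite dominating measure for `P` with
density `p`, then `Q ≪ ν` and `Q` has a density `q` with
`e^{-ε} p ≤ q ≤ e^{ε} p` ν-almost everywhere. -/
theorem stmt6 {T : Type*} [MeasurableSpace T] (P Q : Measure T)
    [IsProbabilityMeasure P] [IsProbabilityMeasure Q]
    (ν : Measure T) [SigmaFinite ν] (ε : ℝ) (hε : 0 ≤ ε)
    (h : dMult P Q ≤ ENNReal.ofReal ε)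
    (p : T → ℝ≥0∞) (hpm : Measurable p) (hp : P = ν.withDensity p) :
    Q ≪ ν ∧ ∃ q : T → ℝ≥0∞, Measurable q ∧ Q = ν.withDensity q ∧
      ∀ᵐ t ∂ν, ENNReal.ofReal (Real.exp (-ε)) * p t ≤ q t ∧
        q t ≤ ENNReal.ofReal (Real.exp ε) * p t := by
  have hS : ∀ S : Set T, MeasurableSet S → logRatio (P S) (Q S) ≤ ENNReal.ofReal ε := by
    intro S hSm
    exact le_trans (le_iSup₂ (f := fun S (_ : MeasurableSet S) => logRatio (P S) (Q S)) S hSm) h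
  have key : ∀ S : Set T, MeasurableSet S →
      Q S ≤ ENNReal.ofReal (Real.exp ε) * P S ∧ P S ≤ ENNReal.ofReal (Real.exp ε) * Q S :=
    fun S hSm => logRatio_bound hε (measure_ne_top P S) (measure_ne_top Q S) (hS S hSm)
  have hQP : Q ≪ P := by
    refine Measure.AbsolutelyContinuous.mk fun S hSm h0 => ?_
    have := (key S hSm).1
    rw [h0, mul_zero] at this
    exact le_antisymm this bot_le
  have hQν : Q ≪ ν := hQP.trans (hp ▸ withDensity_absolutelyContinuous ν p)
  refine ⟨hQν, Q.rnDeriv ν, Q.measurable_rnDeriv ν, (Measure.withDensity_rnDeriv_eq _ _ hQν).symm, ?_⟩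
  have hupper : (Q.rnDeriv ν) ≤ᵐ[ν] fun t => ENNReal.ofReal (Real.exp ε) * p t := by
    refine ae_le_of_forall_setLIntegral_le_of_sigmaFinite (Q.measurable_rnDeriv ν)
      fun s hs _ => ?_
    rw [Measure.setLIntegral_rnDeriv hQν, lintegral_const_mul _ hpm]
    have : ∫⁻ x in s, p x ∂ν = P s := by rw [hp, withDensity_apply p hs]
    rw [this]
    exact (key s hs).1
  have hlower : (fun t => ENNReal.ofReal (Real.exp (-ε)) * p t) ≤ᵐ[ν] Q.rnDeriv ν := by
    refine ae_le_of_forall_setLIntegral_le_of_sigmaFinite (hpm.const_mul _)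
      fun s hs _ => ?_
    rw [Measure.setLIntegral_rnDeriv hQν, lintegral_const_mul _ hpm]
    have hPs : ∫⁻ x in s, p x ∂ν = P s := by rw [hp, withDensity_apply p hs]
    rw [hPs]
    have := (key s hs).2
    calc ENNReal.ofReal (Real.exp (-ε)) * P s
        ≤ ENNReal.ofReal (Real.exp (-ε)) * (ENNReal.ofReal (Real.exp ε) * Q s) :=
          mul_le_mul_right this _
      _ = Q s := by
          rw [← mul_assoc, ← ENNReal.ofReal_mul (Real.exp_pos _).le, ← Real.exp_add,
            neg_add_cancel, Real.exp_zero, ENNReal.ofReal_one, one_mul]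
  filter_upwards [hupper, hlower] with t h1 h2
  exact ⟨h2, h1⟩
end

section
/- Bayes odds-ratio characterization: for a fixed attacker prior with P(E), P(E') > 0 and a mechanism with conditional laws P(t ∈ ·|E), P(t ∈ ·|E') on (T, F), the condition e^{−ε} P(t ∈ S|E') ≤ P(t ∈ S|E) ≤ e^{ε} P(t ∈ S|E') for all S ∈ F holds if and only if the posterior odds satisfy e^{−ε} ≤ [P(E|t)/P(E'|t)] / [P(E)/P(E')] ≤ e^{ε} for (marginal-)almost all t, where posteriors are given by Bayes' rule via densities with respect to the marginal. -/
open MeasureTheory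

/-- Bayes odds-ratio characterization: with prior weights `wE, wE' ∈ (0,1)` on
events `E, E'`, conditional laws `μE, μE'`, and marginal
`m = wE • μE + wE' • μE'`, the mechanism condition
`e^{-ε} μE'(S) ≤ μE(S) ≤ e^ε μE'(S)` (for all measurable `S`) holds iff, for
`m`-almost all `t`, the posterior-to-prior odds ratio of `E` against `E'` lies in
`[e^{-ε}, e^ε]`; by Bayes' rule (the prior odds cancel) the latter is exactly
`e^{-ε} (dμE'/dm)(t) ≤ (dμE/dm)(t) ≤ e^ε (dμE'/dm)(t)`. -/
theorem stmt14 {T : Type*} [MeasurableSpace T] (μE μE' : Measure T)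
    [IsProbabilityMeasure μE] [IsProbabilityMeasure μE']
    (wE wE' : ℝ) (hwE0 : 0 < wE) (hwE1 : wE < 1) (hwE'0 : 0 < wE') (hwE'1 : wE' < 1)
    (ε : ℝ) (hε : 0 ≤ ε)
    (m : Measure T) (hm : m = ENNReal.ofReal wE • μE + ENNReal.ofReal wE' • μE') :
    (∀ S : Set T, MeasurableSet S →
        ENNReal.ofReal (Real.exp (-ε)) * μE' S ≤ μE S ∧
          μE S ≤ ENNReal.ofReal (Real.exp ε) * μE' S) ↔
      (∀ᵐ t ∂m,
        ENNReal.ofReal (Real.exp (-ε)) * μE'.rnDeriv m t ≤ μE.rnDeriv m t ∧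
          μE.rnDeriv m t ≤ ENNReal.ofReal (Real.exp ε) * μE'.rnDeriv m t) := by
  have hwEne : ENNReal.ofReal wE ≠ 0 := by
    simp [ENNReal.ofReal_eq_zero, not_le, hwE0]
  have hwE'ne : ENNReal.ofReal wE' ≠ 0 := by
    simp [ENNReal.ofReal_eq_zero, not_le, hwE'0]
  have hμE : μE ≪ m := by
    intro S hS
    rw [hm] at hS
    simp only [Measure.add_apply, Measure.smul_apply, smul_eq_mul, add_eq_zero,
      mul_eq_zero] at hS
    rcases hS.1 with h | h
    · exact absurd h hwEne
    · exact h
  have hμE' : μE' ≪ m := by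
    intro S hS
    rw [hm] at hS
    simp only [Measure.add_apply, Measure.smul_apply, smul_eq_mul, add_eq_zero,
      mul_eq_zero] at hS
    rcases hS.2 with h | h
    · exact absurd h hwE'ne
    · exact h
  have hmfin : IsFiniteMeasure m := by
    constructor
    rw [hm]
    simp only [Measure.add_apply, Measure.smul_apply, smul_eq_mul, measure_univ, mul_one]
    exact (ENNReal.add_lt_top).2 ⟨ENNReal.ofReal_lt_top, ENNReal.ofReal_lt_top⟩
  have hsf : SigmaFinite m := hmfin.toSigmaFinite
  have hset : ∀ S : Set T, MeasurableSet S →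
      ∫⁻ t in S, μE.rnDeriv m t ∂m = μE S := fun S hS =>
    Measure.setLIntegral_rnDeriv hμE S
  have hset' : ∀ S : Set T, MeasurableSet S →
      ∫⁻ t in S, μE'.rnDeriv m t ∂m = μE' S := fun S hS =>
    Measure.setLIntegral_rnDeriv hμE' S
  constructor
  · intro h
    have h1 : ∀ᵐ t ∂m, ENNReal.ofReal (Real.exp (-ε)) * μE'.rnDeriv m t ≤ μE.rnDeriv m t := by
      refine ae_le_of_forall_setLIntegral_le_of_sigmaFinite
        ((μE'.measurable_rnDeriv m).const_mul _) fun s hs _ => ?_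
      rw [lintegral_const_mul _ (μE'.measurable_rnDeriv m), hset' s hs, hset s hs]
      exact (h s hs).1
    have h2 : ∀ᵐ t ∂m, μE.rnDeriv m t ≤ ENNReal.ofReal (Real.exp ε) * μE'.rnDeriv m t := by
      refine ae_le_of_forall_setLIntegral_le_of_sigmaFinite
        (μE.measurable_rnDeriv m) fun s hs _ => ?_
      rw [lintegral_const_mul _ (μE'.measurable_rnDeriv m), hset' s hs, hset s hs]
      exact (h s hs).2
    filter_upwards [h1, h2] with t ht1 ht2 using ⟨ht1, ht2⟩
  · intro h S hS
    constructor
    · calc ENNReal.ofReal (Real.exp (-ε)) * μE' S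
          = ∫⁻ t in S, ENNReal.ofReal (Real.exp (-ε)) * μE'.rnDeriv m t ∂m := by
            rw [lintegral_const_mul _ (μE'.measurable_rnDeriv m), hset' S hS]
      _ ≤ ∫⁻ t in S, μE.rnDeriv m t ∂m := by
            refine setLIntegral_mono_ae' hS ?_
            filter_upwards [h] with t ht _ using ht.1
      _ = μE S := hset S hS
    · calc μE S = ∫⁻ t in S, μE.rnDeriv m t ∂m := (hset S hS).symm
      _ ≤ ∫⁻ t in S, ENNReal.ofReal (Real.exp ε) * μE'.rnDeriv m t ∂m := by
            refine setLIntegral_mono_ae' hS ?_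
            filter_upwards [h] with t ht _ using ht.2
      _ = ENNReal.ofReal (Real.exp ε) * μE' S := by
            rw [lintegral_const_mul _ (μE'.measurable_rnDeriv m), hset' S hS]
end

section
/- Strong equivalence of multiplicative distance and density ratio metric: for probability measures P, Q on (T, F) that are mutually absolutely continuous with bounded density ratio, d_Mult(P, Q) ≤ δ(P, Q) ≤ 2 d_Mult(P, Q), where δ(P,Q) = esssup_{t,t'} ln[(f(t)/f(t'))·(g(t')/g(t))] for densities f, g of P, Q with respect to a dominating measure. -/
open MeasureTheory ENNReal

/-- The density ratio metric `δ(P,Q) = esssup_{t,t'} |ln[(f(t)/f(t'))·(g(t')/g(t))]|`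
(written via the single ratio `(f(t)g(t'))/(g(t)f(t'))`), where `f, g` are
densities of `P, Q` with respect to a dominating measure `τ`, and the essential
supremum is over pairs `(t,t')` with respect to `τ × τ`. -/
noncomputable def densityRatioMetric {T : Type*} [MeasurableSpace T]
    (f g : T → ℝ≥0∞) (τ : Measure T) : ℝ≥0∞ :=
  essSup (fun p : T × T => logRatio (f p.1 * g p.2) (g p.1 * f p.2)) (τ.prod τ)

lemma logRatio_comm (a b : ℝ≥0∞) : logRatio a b = logRatio b a := by
  have habs : |Real.log (a.toReal / b.toReal)| = |Real.log (b.toReal / a.toReal)| := by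
    rw [show a.toReal / b.toReal = (b.toReal / a.toReal)⁻¹ by rw [inv_div],
      Real.log_inv, abs_neg]
  unfold logRatio
  split_ifs <;> first | rfl | tauto | exact habs


lemma dMult_comm {T : Type*} [MeasurableSpace T] (μ ν : Measure T) :
    dMult μ ν = dMult ν μ := by
  unfold dMult
  exact iSup_congr fun S => iSup_congr fun _ => logRatio_comm _ _


lemma le_of_logRatio_le {a b : ℝ≥0∞} {D : ℝ} (hD : 0 ≤ D)
    (h : logRatio a b ≤ ENNReal.ofReal D) :
    a ≤ ENNReal.ofReal (Real.exp D) * b := by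
  have hK0 : ENNReal.ofReal (Real.exp D) ≠ 0 :=
    (ENNReal.ofReal_pos.mpr (Real.exp_pos D)).ne'
  unfold logRatio at h
  split_ifs at h with h1 h2
  · rcases h1 with ⟨ha, _⟩ | ⟨_, hb⟩
    · simp [ha]
    · rw [hb, ENNReal.mul_top hK0]; exact le_top
  · exact absurd (top_le_iff.mp h) ENNReal.ofReal_ne_top
  · push_neg at h1 h2
    obtain ⟨ha0, hb0, haT, hbT⟩ := h2
    have habs : |Real.log (a.toReal / b.toReal)| ≤ D :=
      (ENNReal.ofReal_le_ofReal_iff hD).mp h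
    have hbp : 0 < b.toReal := ENNReal.toReal_pos hb0 hbT
    have hap : 0 < a.toReal := ENNReal.toReal_pos ha0 haT
    have hlog : Real.log (a.toReal / b.toReal) ≤ D := (abs_le.mp habs).2
    have hdiv : a.toReal / b.toReal ≤ Real.exp D :=
      (Real.log_le_iff_le_exp (div_pos hap hbp)).mp hlog
    have : a.toReal ≤ Real.exp D * b.toReal := by
      rw [div_le_iff₀ hbp] at hdiv; linarith
    calc a = ENNReal.ofReal a.toReal := (ENNReal.ofReal_toReal haT).symm
      _ ≤ ENNReal.ofReal (Real.exp D * b.toReal) := ENNReal.ofReal_le_ofReal this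
      _ = ENNReal.ofReal (Real.exp D) * ENNReal.ofReal b.toReal :=
          ENNReal.ofReal_mul (Real.exp_pos D).le
      _ = ENNReal.ofReal (Real.exp D) * b := by rw [ENNReal.ofReal_toReal hbT]


lemma logRatio_le_of_le {a b : ℝ≥0∞} {D : ℝ} (hD : 0 ≤ D) (ha : a ≠ ⊤) (hb : b ≠ ⊤)
    (h1 : a ≤ ENNReal.ofReal (Real.exp D) * b)
    (h2 : b ≤ ENNReal.ofReal (Real.exp D) * a) :
    logRatio a b ≤ ENNReal.ofReal D := by
  by_cases ha0 : a = 0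
  · have hb0 : b = 0 := by
      rw [ha0, mul_zero] at h2; exact le_antisymm h2 zero_le
    simp [logRatio, ha0, hb0]
  by_cases hb0 : b = 0
  · have : a = 0 := by
      rw [hb0, mul_zero] at h1; exact le_antisymm h1 zero_le
    exact absurd this ha0
  have hKT : ENNReal.ofReal (Real.exp D) ≠ ⊤ := ENNReal.ofReal_ne_top
  have hap : 0 < a.toReal := ENNReal.toReal_pos ha0 ha
  have hbp : 0 < b.toReal := ENNReal.toReal_pos hb0 hb
  have ht1 : a.toReal ≤ Real.exp D * b.toReal := by
    have := ENNReal.toReal_mono (ENNReal.mul_ne_top hKT hb) h1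
    rwa [ENNReal.toReal_mul, ENNReal.toReal_ofReal (Real.exp_pos D).le] at this
  have ht2 : b.toReal ≤ Real.exp D * a.toReal := by
    have := ENNReal.toReal_mono (ENNReal.mul_ne_top hKT ha) h2
    rwa [ENNReal.toReal_mul, ENNReal.toReal_ofReal (Real.exp_pos D).le] at this
  have hlog1 : Real.log (a.toReal / b.toReal) ≤ D := by
    rw [Real.log_le_iff_le_exp (div_pos hap hbp), div_le_iff₀ hbp]; linarith
  have hlog2 : -Real.log (a.toReal / b.toReal) ≤ D := by
    rw [show a.toReal / b.toReal = (b.toReal / a.toReal)⁻¹ by rw [inv_div],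
      Real.log_inv, neg_neg, Real.log_le_iff_le_exp (div_pos hbp hap), div_le_iff₀ hap]
    linarith
  have : logRatio a b = ENNReal.ofReal |Real.log (a.toReal / b.toReal)| := by
    unfold logRatio
    rw [if_neg (by tauto), if_neg (by tauto)]
  rw [this]
  exact ENNReal.ofReal_le_ofReal (abs_le.mpr ⟨by linarith, hlog1⟩)


lemma key_int {T : Type*} [MeasurableSpace T] (τ : Measure T) [SigmaFinite τ]
    (f g : T → ℝ≥0∞) (hf : Measurable f) (hg : Measurable g) (K : ℝ≥0∞)
    (hae : ∀ᵐ p ∂(τ.prod τ), f p.1 * g p.2 ≤ K * (g p.1 * f p.2))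
    {S : Set T} (hS : MeasurableSet S) :
    (∫⁻ t in S, f t ∂τ) * (∫⁻ t, g t ∂τ) ≤ K * ((∫⁻ t in S, g t ∂τ) * (∫⁻ t, f t ∂τ)) := by
  have hac : (τ.restrict S).prod τ ≪ τ.prod τ :=
    (Measure.absolutelyContinuous_of_le Measure.restrict_le_self).prod
      Measure.AbsolutelyContinuous.rfl
  have hae' : ∀ᵐ p ∂((τ.restrict S).prod τ), f p.1 * g p.2 ≤ K * (g p.1 * f p.2) :=
    hae.filter_mono hac.ae_le
  calc (∫⁻ t in S, f t ∂τ) * (∫⁻ t, g t ∂τ)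
      = ∫⁻ p, f p.1 * g p.2 ∂((τ.restrict S).prod τ) :=
        (lintegral_prod_mul hf.aemeasurable hg.aemeasurable).symm
    _ ≤ ∫⁻ p, K * (g p.1 * f p.2) ∂((τ.restrict S).prod τ) := lintegral_mono_ae hae'
    _ = K * ∫⁻ p, g p.1 * f p.2 ∂((τ.restrict S).prod τ) :=
        lintegral_const_mul K ((hg.comp measurable_fst).mul (hf.comp measurable_snd))
    _ = K * ((∫⁻ t in S, g t ∂τ) * (∫⁻ t, f t ∂τ)) := by
        rw [lintegral_prod_mul hg.aemeasurable hf.aemeasurable]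


lemma aux_ae {T : Type*} [MeasurableSpace T] (P Q : Measure T)
    [IsProbabilityMeasure P] [IsProbabilityMeasure Q]
    (τ : Measure T) (f g : T → ℝ≥0∞) (hf : Measurable f) (hg : Measurable g)
    (hP : P = τ.withDensity f) (hQ : Q = τ.withDensity g)
    (hPQ : P ≪ Q) (hd : dMult P Q ≠ ⊤) {c : ℝ} (hc : (dMult P Q).toReal < c) :
    ∀ᵐ t ∂τ, f t ≤ ENNReal.ofReal (Real.exp c) * g t := by
  set k := ENNReal.ofReal (Real.exp c) with hk
  have hk0 : k ≠ 0 := (ENNReal.ofReal_pos.mpr (Real.exp_pos c)).ne'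
  set S := {t | k * g t < f t} with hSdef
  have hS : MeasurableSet S := measurableSet_lt (hg.const_mul k) hf
  have hPS_eq : P S = ∫⁻ t in S, f t ∂τ := by rw [hP, withDensity_apply _ hS]
  have hQS_eq : Q S = ∫⁻ t in S, g t ∂τ := by rw [hQ, withDensity_apply _ hS]
  have hPS_ge : k * Q S ≤ P S := by
    rw [hPS_eq, hQS_eq, ← lintegral_const_mul k hg]
    refine lintegral_mono_ae ((ae_restrict_iff' hS).mpr (ae_of_all _ fun t ht => ?_))
    exact (ht : k * g t < f t).le
  have hQS0 : Q S = 0 := by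
    by_contra hQS
    have hQST : Q S ≠ ⊤ := measure_ne_top Q S
    have hPST : P S ≠ ⊤ := measure_ne_top P S
    have hPSpos : 0 < P S := lt_of_lt_of_le (ENNReal.mul_pos hk0 hQS) hPS_ge
    have hlr : logRatio (P S) (Q S) ≤ dMult P Q := by
      unfold dMult; exact le_iSup₂ (f := fun S (_ : MeasurableSet S) => logRatio (P S) (Q S)) S hS
    have hlrE : logRatio (P S) (Q S) =
        ENNReal.ofReal |Real.log ((P S).toReal / (Q S).toReal)| := by
      unfold logRatio
      rw [if_neg (by push_neg; exact ⟨fun h => absurd h hPSpos.ne', fun h => absurd h hPST⟩),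
        if_neg (by push_neg; exact ⟨hPSpos.ne', hQS, hPST, hQST⟩)]
    have hQSp : 0 < (Q S).toReal := ENNReal.toReal_pos hQS hQST
    have hratio : Real.exp c ≤ (P S).toReal / (Q S).toReal := by
      have := ENNReal.toReal_mono hPST hPS_ge
      rw [ENNReal.toReal_mul, hk, ENNReal.toReal_ofReal (Real.exp_pos c).le] at this
      rw [le_div_iff₀ hQSp]; linarith
    have hclog : c ≤ Real.log ((P S).toReal / (Q S).toReal) := by
      have := Real.log_le_log (Real.exp_pos c) hratio
      rwa [Real.log_exp] at this
    have : ENNReal.ofReal c ≤ dMult P Q := by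
      refine le_trans ?_ hlr
      rw [hlrE]
      exact ENNReal.ofReal_le_ofReal (le_trans hclog (le_abs_self _))
    have := (ENNReal.ofReal_le_iff_le_toReal hd).mp this
    linarith
  have hPS0 : P S = 0 := hPQ hQS0
  have hf0 : ∀ᵐ t ∂τ, t ∈ S → f t = 0 := by
    rw [← ae_restrict_iff' hS]
    rw [hPS_eq] at hPS0
    exact (lintegral_eq_zero_iff hf).mp hPS0
  filter_upwards [hf0] with t ht
  by_contra hlt
  push_neg at hlt
  have htS : t ∈ S := hlt
  have := ht htS
  rw [this] at hlt
  exact absurd hlt (by simp)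


lemma le_of_forall_n {a b : ℝ≥0∞} {D : ℝ} (hb : b ≠ ⊤)
    (h : ∀ n : ℕ, a ≤ ENNReal.ofReal (Real.exp (D + 1 / (n + 1))) * b) :
    a ≤ ENNReal.ofReal (Real.exp D) * b := by
  by_cases hb0 : b = 0
  · have := h 0
    rwa [hb0, mul_zero] at this ⊢
  have haT : a ≠ ⊤ := by
    intro haT
    have := h 0
    rw [haT, top_le_iff] at this
    exact ENNReal.mul_ne_top ENNReal.ofReal_ne_top hb this
  have hbp : 0 < b.toReal := ENNReal.toReal_pos hb0 hb
  have ht : ∀ n : ℕ, a.toReal ≤ Real.exp (D + 1 / (n + 1)) * b.toReal := by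
    intro n
    have := ENNReal.toReal_mono (ENNReal.mul_ne_top ENNReal.ofReal_ne_top hb) (h n)
    rwa [ENNReal.toReal_mul, ENNReal.toReal_ofReal (Real.exp_pos _).le] at this
  have hlim : Filter.Tendsto (fun n : ℕ => Real.exp (D + 1 / (n + 1)) * b.toReal)
      Filter.atTop (nhds (Real.exp D * b.toReal)) := by
    have h1 : Filter.Tendsto (fun n : ℕ => D + 1 / ((n : ℝ) + 1)) Filter.atTop (nhds (D + 0)) :=
      tendsto_const_nhds.add tendsto_one_div_add_atTop_nhds_zero_nat
    rw [add_zero] at h1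
    exact ((Real.continuous_exp.tendsto _).comp h1).mul tendsto_const_nhds
  have hto : a.toReal ≤ Real.exp D * b.toReal := ge_of_tendsto' hlim ht
  calc a = ENNReal.ofReal a.toReal := (ENNReal.ofReal_toReal haT).symm
    _ ≤ ENNReal.ofReal (Real.exp D * b.toReal) := ENNReal.ofReal_le_ofReal hto
    _ = ENNReal.ofReal (Real.exp D) * ENNReal.ofReal b.toReal :=
        ENNReal.ofReal_mul (Real.exp_pos D).le
    _ = ENNReal.ofReal (Real.exp D) * b := by rw [ENNReal.ofReal_toReal hb]


lemma ae_prod_of_ae_ae {T : Type*} [MeasurableSpace T] {τ : Measure T} [SigmaFinite τ]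
    {p q : T → Prop} (hp : ∀ᵐ t ∂τ, p t) (hq : ∀ᵐ t ∂τ, q t) :
    ∀ᵐ z ∂(τ.prod τ), p z.1 ∧ q z.2 := by
  rw [ae_iff] at hp hq ⊢
  have hsub : {z : T × T | ¬(p z.1 ∧ q z.2)} ⊆
      ({t | ¬ p t} ×ˢ Set.univ) ∪ (Set.univ ×ˢ {t | ¬ q t}) := by
    intro z hz
    by_cases h1 : p z.1
    · exact Or.inr ⟨Set.mem_univ _, fun h2 => hz ⟨h1, h2⟩⟩
    · exact Or.inl ⟨h1, Set.mem_univ _⟩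
  refine measure_mono_null hsub ?_
  refine measure_union_null ?_ ?_ <;> rw [Measure.prod_prod] <;> simp [hp, hq]


/-- Strong equivalence of the multiplicative distance and the density ratio
metric: `d_Mult(P,Q) ≤ δ(P,Q) ≤ 2 d_Mult(P,Q)` for mutually absolutely continuous
probability measures with bounded density ratio. -/
theorem stmt16 {T : Type*} [MeasurableSpace T] (P Q : Measure T)
    [IsProbabilityMeasure P] [IsProbabilityMeasure Q]
    (τ : Measure T) [SigmaFinite τ] (f g : T → ℝ≥0∞)
    (hf : Measurable f) (hg : Measurable g)
    (hP : P = τ.withDensity f) (hQ : Q = τ.withDensity g)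
    (hPQ : P ≪ Q) (hQP : Q ≪ P)
    (hbdd : densityRatioMetric f g τ ≠ ⊤) :
    dMult P Q ≤ densityRatioMetric f g τ ∧
      densityRatioMetric f g τ ≤ 2 * dMult P Q := by
  have hPuniv : ∫⁻ t, f t ∂τ = 1 := by
    rw [← setLIntegral_univ, ← withDensity_apply _ MeasurableSet.univ, ← hP]
    exact measure_univ
  have hQuniv : ∫⁻ t, g t ∂τ = 1 := by
    rw [← setLIntegral_univ, ← withDensity_apply _ MeasurableSet.univ, ← hQ]
    exact measure_univ
  constructor
  · -- dMult ≤ δ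
    set d := densityRatioMetric f g τ with hd
    set D := d.toReal with hD
    have hD0 : 0 ≤ D := ENNReal.toReal_nonneg
    have hdof : ENNReal.ofReal D = d := ENNReal.ofReal_toReal hbdd
    set K := ENNReal.ofReal (Real.exp D) with hK
    have hae : ∀ᵐ p ∂(τ.prod τ), logRatio (f p.1 * g p.2) (g p.1 * f p.2) ≤ d := by
      unfold d
      unfold densityRatioMetric
      exact ENNReal.ae_le_essSup _
    have hae1 : ∀ᵐ p ∂(τ.prod τ), f p.1 * g p.2 ≤ K * (g p.1 * f p.2) := by
      filter_upwards [hae] with p hp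
      exact le_of_logRatio_le hD0 (hdof ▸ hp)
    have hae2 : ∀ᵐ p ∂(τ.prod τ), g p.1 * f p.2 ≤ K * (f p.1 * g p.2) := by
      filter_upwards [hae] with p hp
      refine le_of_logRatio_le hD0 ?_
      rw [logRatio_comm]
      exact hdof ▸ hp
    unfold dMult
    refine iSup₂_le fun S hS => ?_
    have hPS : P S = ∫⁻ t in S, f t ∂τ := by rw [hP, withDensity_apply _ hS]
    have hQS : Q S = ∫⁻ t in S, g t ∂τ := by rw [hQ, withDensity_apply _ hS]
    have h1 : P S ≤ K * Q S := by
      have := key_int τ f g hf hg K hae1 hS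
      rwa [hQuniv, hPuniv, mul_one, mul_one, ← hPS, ← hQS] at this
    have h2 : Q S ≤ K * P S := by
      have := key_int τ g f hg hf K hae2 hS
      rwa [hQuniv, hPuniv, mul_one, mul_one, ← hPS, ← hQS] at this
    rw [← hdof]
    exact logRatio_le_of_le hD0 (measure_ne_top P S) (measure_ne_top Q S) h1 h2
  · by_cases hdm : dMult P Q = ⊤
    · rw [hdm, ENNReal.mul_top (by norm_num)]
      exact le_top
    set d := dMult P Q with hd
    set D := d.toReal with hD
    have hD0 : 0 ≤ D := ENNReal.toReal_nonneg
    have hdof : ENNReal.ofReal D = d := ENNReal.ofReal_toReal hdm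
    set K := ENNReal.ofReal (Real.exp D) with hK
    have hfT : ∀ᵐ t ∂τ, f t ≠ ⊤ := by
      have hne : ∫⁻ t, f t ∂τ ≠ ⊤ := by rw [hPuniv]; exact ENNReal.one_ne_top
      filter_upwards [ae_lt_top hf hne] with t ht using ht.ne
    have hgT : ∀ᵐ t ∂τ, g t ≠ ⊤ := by
      have hne : ∫⁻ t, g t ∂τ ≠ ⊤ := by rw [hQuniv]; exact ENNReal.one_ne_top
      filter_upwards [ae_lt_top hg hne] with t ht using ht.ne
    have hfg : ∀ᵐ t ∂τ, ∀ n : ℕ,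
        f t ≤ ENNReal.ofReal (Real.exp (D + 1 / (n + 1))) * g t := by
      rw [ae_all_iff]
      intro n
      exact aux_ae P Q τ f g hf hg hP hQ hPQ hdm
        (lt_add_of_pos_right _ (by positivity))
    have hgf : ∀ᵐ t ∂τ, ∀ n : ℕ,
        g t ≤ ENNReal.ofReal (Real.exp (D + 1 / (n + 1))) * f t := by
      rw [ae_all_iff]
      intro n
      refine aux_ae Q P τ g f hg hf hQ hP hQP ?_ ?_
      · rw [dMult_comm]; exact hdm
      · rw [dMult_comm]
        exact lt_add_of_pos_right _ (by positivity)
    have hgood : ∀ᵐ t ∂τ, f t ≠ ⊤ ∧ g t ≠ ⊤ ∧ f t ≤ K * g t ∧ g t ≤ K * f t := by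
      filter_upwards [hfT, hgT, hfg, hgf] with t h1 h2 h3 h4
      exact ⟨h1, h2, le_of_forall_n h2 h3, le_of_forall_n h1 h4⟩
    have hprod := ae_prod_of_ae_ae hgood hgood
    unfold densityRatioMetric
    refine le_trans (essSup_le_of_ae_le (ENNReal.ofReal D + ENNReal.ofReal D) ?_) ?_
    · filter_upwards [hprod] with p hp
      obtain ⟨⟨hfT1, hgT1, h11, h12⟩, hfT2, hgT2, h21, h22⟩ := hp
      rw [← ENNReal.ofReal_add hD0 hD0]
      have hKK : ENNReal.ofReal (Real.exp (D + D)) = K * K := by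
        rw [Real.exp_add, ENNReal.ofReal_mul (Real.exp_pos D).le]
      refine logRatio_le_of_le (by linarith) (ENNReal.mul_ne_top hfT1 hgT2)
        (ENNReal.mul_ne_top hgT1 hfT2) ?_ ?_
      · rw [hKK]
        calc f p.1 * g p.2 ≤ (K * g p.1) * (K * f p.2) := mul_le_mul' h11 h22
          _ = K * K * (g p.1 * f p.2) := by ring
      · rw [hKK]
        calc g p.1 * f p.2 ≤ (K * f p.1) * (K * g p.2) := mul_le_mul' h12 h21
          _ = K * K * (f p.1 * g p.2) := by ring
    · rw [hdof, two_mul]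
end
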